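/- Multiplicative dynamic feedback fixed point: given c ∈ ℝ^q⟨⟨X⟩⟩ and purely improper d ∈ ℝ^m_{pi}⟨⟨X'⟩⟩ (|X| = m+1, |X'| = q+1), the series e := c ∘̄ δ_{(d^{⧢−1} ∘ c)^{∘−1}} is the unique fixed point of the strong contraction e ↦ c ∘̄ δ_{d ∘ e} on the complete ultrametric space ℝ^q⟨⟨X⟩⟩. -/

import Mathlib

open scoped BigOperators

namespace FPS

/-- A (noncommutative) formal power series over alphabet `X` is a map from words to `ℝ`. -/
abbrev Series (X : Type*) := List X → ℝ

noncomputable section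

variable {X : Type*} [DecidableEq X]

/-- The series `1·∅`. -/
def one : Series X := fun η => if η = [] then 1 else 0

/-- Cauchy (concatenation) product. -/
def cauchy (c d : Series X) : Series X := fun η =>
  ∑ i ∈ Finset.range (η.length + 1), c (η.take i) * d (η.drop i)

/-- Shuffle product. -/
def sh (c d : Series X) : List X → ℝ
  | [] => c [] * d []
  | x :: t => sh (fun w => c (x :: w)) d t + sh c (fun w => d (x :: w)) t

/-- Cauchy powers. -/
def cpow (c : Series X) : ℕ → Series X
  | 0 => one
  | k + 1 => cauchy c (cpow c k)

/-- Shuffle powers. -/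
def shpow (c : Series X) : ℕ → Series X
  | 0 => one
  | k + 1 => sh c (shpow c k)

/-- The proper series `1 - s/(s,∅)` entering the inverse formulas (negated proper part of `s/(s,∅)`). -/
def sprime (s : Series X) : Series X := fun w => if w = [] then 0 else - (s w / s [])

/-- Cauchy inverse `(s,∅)⁻¹ Σ_k (s')^k` of a purely improper series. -/
def cInv (s : Series X) : Series X := fun η =>
  (s [])⁻¹ * ∑ k ∈ Finset.range (η.length + 1), cpow (sprime s) k η

/-- Shuffle inverse `(s,∅)⁻¹ Σ_k (s')^{⧢k}` of a purely improper series. -/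
def shInv (s : Series X) : Series X := fun η =>
  (s [])⁻¹ * ∑ k ∈ Finset.range (η.length + 1), shpow (sprime s) k η

/-- The order: minimal length of a word in the support (`⊤` for the zero series). -/
def ord (c : Series X) : ℕ∞ := sInf ((fun η : List X => (η.length : ℕ∞)) '' {η | c η ≠ 0})

/-- `σ^n` with `σ^⊤ = 0`. -/
def powE (σ : ℝ) : ℕ∞ → ℝ := fun n => if n = ⊤ then 0 else σ ^ n.toNat

/-- The ultrametric `κ(c,d) = σ^{ord(c-d)}`. -/
def kappa (σ : ℝ) (c d : Series X) : ℝ := powE σ (ord (c - d))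

/-- Order of a vector of series (minimum over components). -/
def ordV {n : ℕ} (c : Fin n → Series X) : ℕ∞ := ⨅ i, ord (c i)

/-- Ultrametric on vectors of series. -/
def kappaV (σ : ℝ) {n : ℕ} (c d : Fin n → Series X) : ℝ := powE σ (ordV (c - d))

/-- Proper part `c - (c,∅)∅`. -/
def properPart (c : Series X) : Series X := fun w => if w = [] then 0 else c w

/-- Left concatenation by a letter: `x·s`. -/
def leftc (x : X) (s : Series X) : Series X := fun η =>
  match η with
  | [] => 0
  | y :: t => if y = x then s t else 0

end

noncomputable section

/-- `φ̄_d(η)` : the algebra homomorphism defining the multiplicative mixed composition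
product, with `φ̄_d(x_0)(w) = x_0 w` and `φ̄_d(x_i)(w) = x_i (d_i ⧢ w)`. -/
def phiWord {m : ℕ} (d : Fin m → Series (Fin (m + 1))) :
    List (Fin (m + 1)) → Series (Fin (m + 1)) → Series (Fin (m + 1))
  | [], w => w
  | i :: t, w =>
      Fin.cases (leftc 0 (phiWord d t w)) (fun j => leftc j.succ (sh (d j) (phiWord d t w))) i

/-- Multiplicative mixed composition product `c ∘̄ δ_d = Σ_η (c,η) φ̄_d(η)(1)`. -/
def mix {m : ℕ} (c : Series (Fin (m + 1))) (d : Fin m → Series (Fin (m + 1))) :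
    Series (Fin (m + 1)) := fun η =>
  ∑ k ∈ Finset.range (η.length + 1),
    ∑ v : List.Vector (Fin (m + 1)) k, c v.toList * phiWord d v.toList one η

/-- `ψ_e(η)` : the algebra homomorphism defining the composition product, with
`ψ_e(x'_i)(w) = x_0 (e_i ⧢ w)`, `e_0 = 1∅`. -/
def psiWord {ℓ m : ℕ} (e : Fin ℓ → Series (Fin (m + 1))) :
    List (Fin (ℓ + 1)) → Series (Fin (m + 1)) → Series (Fin (m + 1))
  | [], w => w
  | i :: t, w => leftc 0 (sh (Fin.cases one e i) (psiWord e t w))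

/-- Composition product `c ∘ e = Σ_η (c,η) ψ_e(η)(1)`. -/
def comp {ℓ m : ℕ} (c : Series (Fin (ℓ + 1))) (e : Fin ℓ → Series (Fin (m + 1))) :
    Series (Fin (m + 1)) := fun η =>
  ∑ k ∈ Finset.range (η.length + 1),
    ∑ v : List.Vector (Fin (ℓ + 1)) k, c v.toList * psiWord e v.toList one η

/-- The multiplicative composition product on `δ`-series:
`δ_c ∘ δ_d = δ_{d ⧢ (c ∘̄ δ_d)}`, expressed on the underlying series. -/
def star {m : ℕ} (c d : Fin m → Series (Fin (m + 1))) : Fin m → Series (Fin (m + 1)) :=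
  fun i => sh (d i) (mix (c i) d)

/-- The all-ones series vector (generating series of the identity `δ_1`). -/
def oneV {X : Type*} [DecidableEq X] (m : ℕ) : Fin m → Series X := fun _ => one

open Classical in
/-- The inverse `d^{∘-1}` in the multiplicative dynamic output feedback group: the unique
solution of `e = d^{⧢-1} ∘̄ δ_e`. -/
def dynInv {m : ℕ} (d : Fin m → Series (Fin (m + 1))) : Fin m → Series (Fin (m + 1)) :=
  if h : ∃ e : Fin m → Series (Fin (m + 1)), e = fun i => mix (shInv (d i)) e then h.choose
  else oneV m

/-- Shuffle power of a family: `c^{⧢n} = c_1^{⧢n_1} ⧢ ⋯ ⧢ c_ℓ^{⧢n_ℓ}`. -/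
def shFam {X : Type*} [DecidableEq X] {ℓ : ℕ} (c : Fin ℓ → Series X) (n : Fin ℓ →₀ ℕ) :
    Series X :=
  (List.finRange ℓ).foldr (fun i acc => sh (shpow (c i) (n i)) acc) one

/-- Wiener-Fliess composition product `d ∘̂ c = Σ_{η∈X̃*} (d,η) c^{⧢η}` of a commutative
series `d` with a (proper) noncommutative series vector `c`. -/
def wf {X : Type*} [DecidableEq X] {ℓ : ℕ} (d : MvPowerSeries (Fin ℓ) ℝ)
    (c : Fin ℓ → Series X) : Series X := fun η =>
  ∑ n ∈ Finset.Iic (Finsupp.equivFunOnFinite.symm fun _ : Fin ℓ => η.length),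
    MvPowerSeries.coeff n d * shFam c n η

end


/-! ### Auxiliary lemmas -/

set_option linter.unusedSectionVars false

noncomputable section Aux

variable {X : Type*} [DecidableEq X]

lemma one_nil : (one : Series X) [] = 1 := rfl

lemma one_cons (x : X) (t : List X) : (one : Series X) (x :: t) = 0 := rfl

lemma sh_nil (a b : Series X) : sh a b [] = a [] * b [] := rfl

lemma sh_cons (a b : Series X) (x : X) (t : List X) :
    sh a b (x :: t) = sh (fun w => a (x :: w)) b t + sh a (fun w => b (x :: w)) t := rfl

lemma sh_add_left : ∀ (η : List X) (a a' b : Series X),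
    sh (fun w => a w + a' w) b η = sh a b η + sh a' b η
  | [], a, a', b => by simp [sh_nil]; ring
  | x :: t, a, a', b => by
    rw [sh_cons, sh_cons, sh_cons]
    rw [sh_add_left t (fun w => a (x :: w)) (fun w => a' (x :: w)) b,
      sh_add_left t a a' (fun w => b (x :: w))]
    ring

lemma sh_add_right : ∀ (η : List X) (a b b' : Series X),
    sh a (fun w => b w + b' w) η = sh a b η + sh a b' η
  | [], a, b, b' => by simp [sh_nil]; ring
  | x :: t, a, b, b' => by
    rw [sh_cons, sh_cons, sh_cons]
    rw [sh_add_right t (fun w => a (x :: w)) b b', sh_add_right t a (fun w => b (x :: w))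
      (fun w => b' (x :: w))]
    ring

lemma sh_smul_left : ∀ (η : List X) (r : ℝ) (a b : Series X),
    sh (fun w => r * a w) b η = r * sh a b η
  | [], r, a, b => by simp [sh_nil]; ring
  | x :: t, r, a, b => by
    rw [sh_cons, sh_cons, sh_smul_left t r (fun w => a (x :: w)) b,
      sh_smul_left t r a (fun w => b (x :: w))]
    ring

lemma sh_smul_right : ∀ (η : List X) (r : ℝ) (a b : Series X),
    sh a (fun w => r * b w) η = r * sh a b η
  | [], r, a, b => by simp [sh_nil]; ring
  | x :: t, r, a, b => by
    rw [sh_cons, sh_cons, sh_smul_right t r (fun w => a (x :: w)) b,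
      sh_smul_right t r a (fun w => b (x :: w))]
    ring

lemma sh_zero_left : ∀ (η : List X) (b : Series X), sh (fun _ => 0) b η = 0
  | [], b => by simp [sh_nil]
  | x :: t, b => by
    rw [sh_cons, sh_zero_left t b, sh_zero_left t (fun w => b (x :: w))]; simp

lemma sh_zero_right : ∀ (η : List X) (a : Series X), sh a (fun _ => 0) η = 0
  | [], a => by simp [sh_nil]
  | x :: t, a => by
    rw [sh_cons, sh_zero_right t a, sh_zero_right t (fun w => a (x :: w))]; simp

lemma sh_comm : ∀ (η : List X) (a b : Series X), sh a b η = sh b a η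
  | [], a, b => by simp [sh_nil]; ring
  | x :: t, a, b => by
    rw [sh_cons, sh_cons, sh_comm t (fun w => a (x :: w)) b, sh_comm t a (fun w => b (x :: w))]
    ring

lemma sh_one_left : ∀ (η : List X) (a : Series X), sh one a η = a η
  | [], a => by simp [sh_nil, one_nil]
  | x :: t, a => by
    have h : (fun w => (one : Series X) (x :: w)) = fun _ => 0 := by
      funext w; rfl
    rw [sh_cons, h, sh_zero_left, sh_one_left t (fun w => a (x :: w))]
    simp

lemma sh_one_right (η : List X) (a : Series X) : sh a one η = a η := by
  rw [sh_comm, sh_one_left]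

lemma sh_assoc : ∀ (η : List X) (a b c : Series X), sh (sh a b) c η = sh a (sh b c) η
  | [], a, b, c => by simp [sh_nil]; ring
  | x :: t, a, b, c => by
    rw [sh_cons, sh_cons]
    have h1 : (fun w => sh a b (x :: w)) =
        fun w => sh (fun u => a (x :: u)) b w + sh a (fun u => b (x :: u)) w := by
      funext w; rw [sh_cons]
    have h2 : (fun w => sh b c (x :: w)) =
        fun w => sh (fun u => b (x :: u)) c w + sh b (fun u => c (x :: u)) w := by
      funext w; rw [sh_cons]
    rw [h1, h2, sh_add_left, sh_add_right,
      sh_assoc t (fun u => a (x :: u)) b c,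
      sh_assoc t a (fun u => b (x :: u)) c,
      sh_assoc t a b (fun u => c (x :: u))]
    ring

lemma sh_congr : ∀ (η : List X) (a a' b b' : Series X),
    (∀ u : List X, u.length ≤ η.length → a u = a' u) →
    (∀ u : List X, u.length ≤ η.length → b u = b' u) →
    sh a b η = sh a' b' η
  | [], a, a', b, b', ha, hb => by
    rw [sh_nil, sh_nil, ha [] (by simp), hb [] (by simp)]
  | x :: t, a, a', b, b', ha, hb => by
    rw [sh_cons, sh_cons]
    rw [sh_congr t (fun w => a (x :: w)) (fun w => a' (x :: w)) b b'
        (fun u hu => ha (x :: u) (by simpa using Nat.succ_le_succ hu))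
        (fun u hu => hb u (le_trans hu (by simp))),
      sh_congr t a a' (fun w => b (x :: w)) (fun w => b' (x :: w))
        (fun u hu => ha u (le_trans hu (by simp)))
        (fun u hu => hb (x :: u) (by simpa using Nat.succ_le_succ hu))]

lemma sh_vanish : ∀ (η : List X) (j l : ℕ) (a b : Series X),
    (∀ u : List X, u.length < j → a u = 0) → (∀ u : List X, u.length < l → b u = 0) →
    η.length < j + l → sh a b η = 0
  | [], j, l, a, b, ha, hb, h => by
    rw [sh_nil]
    by_cases hj : 0 < j
    · rw [ha [] (by simpa using hj)]; ring
    · have hl : 0 < l := by omega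
      rw [hb [] (by simpa using hl)]; ring
  | x :: t, j, l, a, b, ha, hb, h => by
    rw [sh_cons]
    have hterm1 : sh (fun w => a (x :: w)) b t = 0 := by
      rcases Nat.eq_zero_or_pos j with hj | hj
      · exact sh_vanish t 0 (l - 1) (fun w => a (x :: w)) b (fun u hu => by omega)
          (fun u hu => hb u (by omega)) (by simp at h ⊢; omega)
      · exact sh_vanish t (j - 1) l (fun w => a (x :: w)) b
          (fun u hu => ha (x :: u) (by simp; omega))
          hb (by simp at h ⊢; omega)
    have hterm2 : sh a (fun w => b (x :: w)) t = 0 := by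
      rcases Nat.eq_zero_or_pos l with hl | hl
      · exact sh_vanish t (j - 1) 0 a (fun w => b (x :: w))
          (fun u hu => ha u (by omega)) (fun u hu => by omega) (by simp at h ⊢; omega)
      · exact sh_vanish t j (l - 1) a (fun w => b (x :: w)) ha
          (fun u hu => hb (x :: u) (by simp; omega)) (by simp at h ⊢; omega)
    rw [hterm1, hterm2]; ring

lemma sh_sum_right {ι : Type*} (s : Finset ι) (a : Series X) (g : ι → Series X) (η : List X) :
    sh a (fun w => ∑ k ∈ s, g k w) η = ∑ k ∈ s, sh a (g k) η := by
  classical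
  induction s using Finset.induction_on with
  | empty => simpa using sh_zero_right η a
  | insert i s' hk ih =>
      rw [Finset.sum_insert hk]
      have : (fun w => ∑ k ∈ insert i s', g k w) =
          fun w => g i w + ∑ k ∈ s', g k w := by
        funext w; rw [Finset.sum_insert hk]
      rw [this, sh_add_right, ih]

lemma vec_sum_zero {α : Type*} [Fintype α] [DecidableEq α] (f : List.Vector α 0 → ℝ) :
    (∑ v : List.Vector α 0, f v) = f List.Vector.nil := by
  haveI : Unique (List.Vector α 0) :=
    ⟨⟨List.Vector.nil⟩, fun v => List.Vector.eq_nil v⟩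
  exact (Fintype.sum_unique f).trans (congrArg f (List.Vector.eq_nil _))

lemma vec_sum_succ {α : Type*} [Fintype α] [DecidableEq α] (k : ℕ)
    (f : List.Vector α (k + 1) → ℝ) :
    (∑ v : List.Vector α (k + 1), f v) = ∑ x : α, ∑ t : List.Vector α k, f (x ::ᵥ t) := by
  have h1 : (∑ p : α × List.Vector α k, f (p.1 ::ᵥ p.2)) = ∑ v, f v :=
    Fintype.sum_equiv
      ⟨fun p => p.1 ::ᵥ p.2, fun v => (v.head, v.tail),
       fun p => by simp,
       fun v => List.Vector.cons_head_tail v⟩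
      (fun p => f (p.1 ::ᵥ p.2)) f (fun p => rfl)
  rw [← h1, Fintype.sum_prod_type]

lemma leftc_nil (x : X) (s : Series X) : leftc x s [] = 0 := rfl

lemma leftc_cons (x y : X) (s : Series X) (t : List X) :
    leftc x s (y :: t) = if y = x then s t else 0 := rfl

lemma phiWord_vanish {m : ℕ} (d : Fin m → Series (Fin (m + 1))) :
    ∀ (v : List (Fin (m + 1))) (w : Series (Fin (m + 1))) (η : List (Fin (m + 1))),
      η.length < v.length → phiWord d v w η = 0
  | [], w, η, h => by simp at h
  | i :: t, w, η, h => by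
    induction i using Fin.cases with
    | zero =>
        show leftc 0 (phiWord d t w) η = 0
        match η with
        | [] => rfl
        | y :: t' =>
            rw [leftc_cons]
            split
            · exact phiWord_vanish d t w t' (by simp at h ⊢; omega)
            · rfl
    | succ j =>
        show leftc j.succ (sh (d j) (phiWord d t w)) η = 0
        match η with
        | [] => rfl
        | y :: t' =>
            rw [leftc_cons]
            split
            · exact sh_vanish t' 0 t.length (d j) (phiWord d t w)
                (fun u hu => by omega)
                (fun u hu => phiWord_vanish d t w u hu)
                (by simp at h ⊢; omega)
            · rfl

lemma psiWord_vanish {ℓ m : ℕ} (e : Fin ℓ → Series (Fin (m + 1))) :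
    ∀ (v : List (Fin (ℓ + 1))) (w : Series (Fin (m + 1))) (η : List (Fin (m + 1))),
      η.length < v.length → psiWord e v w η = 0
  | [], w, η, h => by simp at h
  | i :: t, w, η, h => by
    show leftc 0 (sh (Fin.cases one e i) (psiWord e t w)) η = 0
    match η with
    | [] => rfl
    | y :: t' =>
        rw [leftc_cons]
        split
        · exact sh_vanish t' 0 t.length _ (psiWord e t w)
            (fun u hu => by omega)
            (fun u hu => psiWord_vanish e t w u hu)
            (by simp at h ⊢; omega)
        · rfl

section MixComp

variable {ℓ m : ℕ}

lemma mix_nil (c : Series (Fin (m + 1))) (E : Fin m → Series (Fin (m + 1))) :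
    mix c E [] = c [] := by
  show (∑ k ∈ Finset.range (0 + 1), ∑ v : List.Vector (Fin (m + 1)) k,
      c v.toList * phiWord E v.toList one []) = c []
  rw [Finset.sum_range_one, vec_sum_zero]
  show c [] * one [] = c []
  rw [one_nil, mul_one]

lemma comp_nil (s : Series (Fin (ℓ + 1))) (e : Fin ℓ → Series (Fin (m + 1))) :
    comp s e [] = s [] := by
  show (∑ k ∈ Finset.range (0 + 1), ∑ v : List.Vector (Fin (ℓ + 1)) k,
      s v.toList * psiWord e v.toList one []) = s []
  rw [Finset.sum_range_one, vec_sum_zero]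
  show s [] * one [] = s []
  rw [one_nil, mul_one]

lemma mix_add_left (c c' : Series (Fin (m + 1))) (E : Fin m → Series (Fin (m + 1)))
    (η : List (Fin (m + 1))) :
    mix (fun w => c w + c' w) E η = mix c E η + mix c' E η := by
  simp only [mix, add_mul, Finset.sum_add_distrib]

lemma mix_zero_left (E : Fin m → Series (Fin (m + 1))) (η : List (Fin (m + 1))) :
    mix (fun _ => (0 : ℝ)) E η = 0 := by
  simp [mix]

lemma mix_smul_left (r : ℝ) (c : Series (Fin (m + 1))) (E : Fin m → Series (Fin (m + 1)))
    (η : List (Fin (m + 1))) :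
    mix (fun w => r * c w) E η = r * mix c E η := by
  simp only [mix, mul_assoc, ← Finset.mul_sum]

lemma mix_sum_left {ι : Type*} (s : Finset ι) (g : ι → Series (Fin (m + 1)))
    (E : Fin m → Series (Fin (m + 1))) (η : List (Fin (m + 1))) :
    mix (fun w => ∑ i ∈ s, g i w) E η = ∑ i ∈ s, mix (g i) E η := by
  classical
  induction s using Finset.induction_on with
  | empty => simpa using mix_zero_left E η
  | insert i s' hk ih =>
      rw [Finset.sum_insert hk, ← ih, ← mix_add_left]
      congr 1
      funext w
      rw [Finset.sum_insert hk]

lemma comp_add_left (s s' : Series (Fin (ℓ + 1))) (e : Fin ℓ → Series (Fin (m + 1)))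
    (η : List (Fin (m + 1))) :
    comp (fun w => s w + s' w) e η = comp s e η + comp s' e η := by
  simp only [comp, add_mul, Finset.sum_add_distrib]

lemma mix_trunc (c : Series (Fin (m + 1))) (E : Fin m → Series (Fin (m + 1)))
    (N : ℕ) (η : List (Fin (m + 1))) (h : η.length < N) :
    mix c E η = ∑ k ∈ Finset.range N,
      ∑ v : List.Vector (Fin (m + 1)) k, c v.toList * phiWord E v.toList one η := by
  refine Finset.sum_subset (by intro k hk; simp at hk ⊢; omega) ?_
  intro k hk hnk
  simp only [Finset.mem_range] at hk hnk
  refine Finset.sum_eq_zero fun v _ => ?_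
  rw [phiWord_vanish E v.toList one η (by rw [List.Vector.toList_length]; omega), mul_zero]

lemma comp_trunc (s : Series (Fin (ℓ + 1))) (e : Fin ℓ → Series (Fin (m + 1)))
    (N : ℕ) (η : List (Fin (m + 1))) (h : η.length < N) :
    comp s e η = ∑ k ∈ Finset.range N,
      ∑ v : List.Vector (Fin (ℓ + 1)) k, s v.toList * psiWord e v.toList one η := by
  refine Finset.sum_subset (by intro k hk; simp at hk ⊢; omega) ?_
  intro k hk hnk
  simp only [Finset.mem_range] at hk hnk
  refine Finset.sum_eq_zero fun v _ => ?_
  rw [psiWord_vanish e v.toList one η (by rw [List.Vector.toList_length]; omega), mul_zero]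

lemma mix_one (E : Fin m → Series (Fin (m + 1))) (η : List (Fin (m + 1))) :
    mix one E η = one η := by
  show (∑ k ∈ Finset.range (η.length + 1), ∑ v : List.Vector (Fin (m + 1)) k,
      one v.toList * phiWord E v.toList one η) = one η
  rw [Finset.sum_eq_single_of_mem 0 (by simp)]
  · rw [vec_sum_zero]
    show one [] * phiWord E [] one η = one η
    rw [one_nil, one_mul]
    rfl
  · intro k _ hk
    refine Finset.sum_eq_zero fun v _ => ?_
    have : v.toList ≠ [] := by
      intro hnil
      have := List.Vector.toList_length v
      rw [hnil] at this
      exact hk this.symm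
    match hv : v.toList with
    | [] => exact absurd hv this
    | y :: t' => rw [one_cons, zero_mul]

lemma comp_one (e : Fin ℓ → Series (Fin (m + 1))) (η : List (Fin (m + 1))) :
    comp one e η = one η := by
  show (∑ k ∈ Finset.range (η.length + 1), ∑ v : List.Vector (Fin (ℓ + 1)) k,
      one v.toList * psiWord e v.toList one η) = one η
  rw [Finset.sum_eq_single_of_mem 0 (by simp)]
  · rw [vec_sum_zero]
    show one [] * psiWord e [] one η = one η
    rw [one_nil, one_mul]
    rfl
  · intro k _ hk
    refine Finset.sum_eq_zero fun v _ => ?_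
    have : v.toList ≠ [] := by
      intro hnil
      have := List.Vector.toList_length v
      rw [hnil] at this
      exact hk this.symm
    match hv : v.toList with
    | [] => exact absurd hv this
    | y :: t' => rw [one_cons, zero_mul]

lemma mix_cons_zero (c : Series (Fin (m + 1))) (E : Fin m → Series (Fin (m + 1)))
    (η : List (Fin (m + 1))) :
    mix c E ((0 : Fin (m + 1)) :: η) = mix (fun w => c (0 :: w)) E η := by
  show (∑ k ∈ Finset.range (η.length + 1 + 1), ∑ v : List.Vector (Fin (m + 1)) k,
      c v.toList * phiWord E v.toList one ((0 : Fin (m + 1)) :: η)) = _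
  rw [Finset.sum_range_succ']
  have hf0 : (∑ v : List.Vector (Fin (m + 1)) 0,
      c v.toList * phiWord E v.toList one ((0 : Fin (m + 1)) :: η)) = 0 := by
    rw [vec_sum_zero]
    show c [] * one ((0 : Fin (m + 1)) :: η) = 0
    rw [one_cons, mul_zero]
  rw [hf0, add_zero]
  refine Finset.sum_congr rfl fun k _ => ?_
  rw [vec_sum_succ, Fin.sum_univ_succ]
  have hsucc : (∑ j : Fin m, ∑ t : List.Vector (Fin (m + 1)) k,
      c ((j.succ ::ᵥ t).toList) * phiWord E ((j.succ ::ᵥ t).toList) one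
        ((0 : Fin (m + 1)) :: η)) = 0 := by
    refine Finset.sum_eq_zero fun j _ => Finset.sum_eq_zero fun t _ => ?_
    rw [List.Vector.toList_cons]
    show c _ * (Fin.cases (motive := fun _ => Series (Fin (m + 1))) (leftc 0 (phiWord E t.toList one))
      (fun j' => leftc j'.succ (sh (E j') (phiWord E t.toList one))) j.succ)
        ((0 : Fin (m + 1)) :: η) = 0
    rw [Fin.cases_succ, leftc_cons, if_neg (Ne.symm (Fin.succ_ne_zero j)), mul_zero]
  rw [hsucc, add_zero]
  refine Finset.sum_congr rfl fun t _ => ?_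
  rw [List.Vector.toList_cons]
  show c _ * (Fin.cases (motive := fun _ => Series (Fin (m + 1))) (leftc 0 (phiWord E t.toList one))
    (fun j' => leftc j'.succ (sh (E j') (phiWord E t.toList one))) (0 : Fin (m + 1)))
      ((0 : Fin (m + 1)) :: η) = _
  rw [Fin.cases_zero, leftc_cons, if_pos rfl]

lemma mix_cons_succ (c : Series (Fin (m + 1))) (E : Fin m → Series (Fin (m + 1)))
    (j : Fin m) (η : List (Fin (m + 1))) :
    mix c E (j.succ :: η) = sh (E j) (mix (fun w => c (j.succ :: w)) E) η := by
  have hR : sh (E j) (mix (fun w => c (j.succ :: w)) E) η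
      = sh (E j) (fun w => ∑ k ∈ Finset.range (η.length + 1),
          ∑ t : List.Vector (Fin (m + 1)) k,
            c (j.succ :: t.toList) * phiWord E t.toList one w) η := by
    refine sh_congr η _ _ _ _ (fun u _ => rfl) (fun u hu => ?_)
    rw [mix_trunc _ _ (η.length + 1) u (by omega)]
  rw [hR, sh_sum_right]
  have hK : ∀ k ∈ Finset.range (η.length + 1),
      sh (E j) (fun w => ∑ t : List.Vector (Fin (m + 1)) k,
        c (j.succ :: t.toList) * phiWord E t.toList one w) η
      = ∑ t : List.Vector (Fin (m + 1)) k,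
          c (j.succ :: t.toList) * sh (E j) (phiWord E t.toList one) η := by
    intro k _
    rw [sh_sum_right]
    exact Finset.sum_congr rfl fun t _ => sh_smul_right η _ _ _
  rw [Finset.sum_congr rfl hK]
  show (∑ k ∈ Finset.range (η.length + 1 + 1), ∑ v : List.Vector (Fin (m + 1)) k,
      c v.toList * phiWord E v.toList one (j.succ :: η)) = _
  rw [Finset.sum_range_succ']
  have hf0 : (∑ v : List.Vector (Fin (m + 1)) 0,
      c v.toList * phiWord E v.toList one (j.succ :: η)) = 0 := by
    rw [vec_sum_zero]
    show c [] * one (j.succ :: η) = 0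
    rw [one_cons, mul_zero]
  rw [hf0, add_zero]
  refine Finset.sum_congr rfl fun k _ => ?_
  rw [vec_sum_succ, Fin.sum_univ_succ]
  have h0 : (∑ t : List.Vector (Fin (m + 1)) k,
      c (((0 : Fin (m + 1)) ::ᵥ t).toList) *
        phiWord E (((0 : Fin (m + 1)) ::ᵥ t).toList) one (j.succ :: η)) = 0 := by
    refine Finset.sum_eq_zero fun t _ => ?_
    rw [List.Vector.toList_cons]
    show c _ * (Fin.cases (motive := fun _ => Series (Fin (m + 1))) (leftc 0 (phiWord E t.toList one))
      (fun j' => leftc j'.succ (sh (E j') (phiWord E t.toList one))) (0 : Fin (m + 1)))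
        (j.succ :: η) = 0
    rw [Fin.cases_zero, leftc_cons, if_neg (Fin.succ_ne_zero j), mul_zero]
  rw [h0, zero_add]
  rw [Fintype.sum_eq_single j (fun i' hi' => ?_)]
  · refine Finset.sum_congr rfl fun t _ => ?_
    rw [List.Vector.toList_cons]
    show c _ * (Fin.cases (motive := fun _ => Series (Fin (m + 1))) (leftc 0 (phiWord E t.toList one))
      (fun j' => leftc j'.succ (sh (E j') (phiWord E t.toList one))) j.succ) (j.succ :: η) = _
    rw [Fin.cases_succ, leftc_cons, if_pos rfl]
  · refine Finset.sum_eq_zero fun t _ => ?_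
    rw [List.Vector.toList_cons]
    show c _ * (Fin.cases (motive := fun _ => Series (Fin (m + 1))) (leftc 0 (phiWord E t.toList one))
      (fun j' => leftc j'.succ (sh (E j') (phiWord E t.toList one))) i'.succ) (j.succ :: η) = 0
    rw [Fin.cases_succ, leftc_cons,
      if_neg (fun h => hi' (Fin.succ_injective _ (h : j.succ = i'.succ)).symm), mul_zero]

lemma comp_cons_zero (s : Series (Fin (ℓ + 1))) (e : Fin ℓ → Series (Fin (m + 1)))
    (η : List (Fin (m + 1))) :
    comp s e ((0 : Fin (m + 1)) :: η)
      = ∑ i : Fin (ℓ + 1), sh (Fin.cases one e i) (comp (fun w => s (i :: w)) e) η := by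
  have hR : ∀ i : Fin (ℓ + 1), sh (Fin.cases one e i) (comp (fun w => s (i :: w)) e) η
      = ∑ k ∈ Finset.range (η.length + 1), ∑ t : List.Vector (Fin (ℓ + 1)) k,
          s (i :: t.toList) * sh (Fin.cases one e i) (psiWord e t.toList one) η := by
    intro i
    have h1 : sh (Fin.cases one e i) (comp (fun w => s (i :: w)) e) η
        = sh (Fin.cases one e i) (fun w => ∑ k ∈ Finset.range (η.length + 1),
            ∑ t : List.Vector (Fin (ℓ + 1)) k,
              s (i :: t.toList) * psiWord e t.toList one w) η := by
      refine sh_congr η _ _ _ _ (fun u _ => rfl) (fun u hu => ?_)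
      rw [comp_trunc _ _ (η.length + 1) u (by omega)]
    rw [h1, sh_sum_right]
    refine Finset.sum_congr rfl fun k _ => ?_
    rw [sh_sum_right]
    exact Finset.sum_congr rfl fun t _ => sh_smul_right η _ _ _
  rw [Finset.sum_congr rfl fun i _ => hR i, Finset.sum_comm]
  show (∑ k ∈ Finset.range (η.length + 1 + 1), ∑ v : List.Vector (Fin (ℓ + 1)) k,
      s v.toList * psiWord e v.toList one ((0 : Fin (m + 1)) :: η)) = _
  rw [Finset.sum_range_succ']
  have hf0 : (∑ v : List.Vector (Fin (ℓ + 1)) 0,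
      s v.toList * psiWord e v.toList one ((0 : Fin (m + 1)) :: η)) = 0 := by
    rw [vec_sum_zero]
    show s [] * one ((0 : Fin (m + 1)) :: η) = 0
    rw [one_cons, mul_zero]
  rw [hf0, add_zero]
  refine Finset.sum_congr rfl fun k _ => ?_
  rw [vec_sum_succ]
  refine Finset.sum_congr rfl fun i _ => Finset.sum_congr rfl fun t _ => ?_
  rw [List.Vector.toList_cons]
  show s _ * leftc 0 (sh (Fin.cases one e i) (psiWord e t.toList one))
      ((0 : Fin (m + 1)) :: η) = _
  rw [leftc_cons, if_pos rfl]

lemma comp_cons_succ (s : Series (Fin (ℓ + 1))) (e : Fin ℓ → Series (Fin (m + 1)))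
    (j : Fin m) (η : List (Fin (m + 1))) :
    comp s e (j.succ :: η) = 0 := by
  show (∑ k ∈ Finset.range (η.length + 1 + 1), ∑ v : List.Vector (Fin (ℓ + 1)) k,
      s v.toList * psiWord e v.toList one (j.succ :: η)) = 0
  refine Finset.sum_eq_zero fun k _ => ?_
  match k with
  | 0 =>
      rw [vec_sum_zero]
      show s [] * one (j.succ :: η) = 0
      rw [one_cons, mul_zero]
  | k + 1 =>
      rw [vec_sum_succ]
      refine Finset.sum_eq_zero fun i _ => Finset.sum_eq_zero fun t _ => ?_
      rw [List.Vector.toList_cons]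
      show s _ * leftc 0 (sh (Fin.cases one e i) (psiWord e t.toList one)) (j.succ :: η) = 0
      rw [leftc_cons, if_neg (Fin.succ_ne_zero j), mul_zero]

end MixComp

section ShInv

lemma sh_sub_left (η : List X) (a b c : Series X) :
    sh (fun w => a w - b w) c η = sh a c η - sh b c η := by
  have h : (fun w => a w - b w) = fun w => a w + (-1) * b w := by funext w; ring
  rw [h, sh_add_left, sh_smul_left]; ring

lemma sh_sum_left {ι : Type*} (s : Finset ι) (g : ι → Series X) (b : Series X) (η : List X) :
    sh (fun w => ∑ k ∈ s, g k w) b η = ∑ k ∈ s, sh (g k) b η := by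
  rw [sh_comm, sh_sum_right]
  exact Finset.sum_congr rfl fun k _ => sh_comm η b (g k)

lemma sh_left_comm (η : List X) (a b c : Series X) : sh a (sh b c) η = sh b (sh a c) η := by
  rw [← sh_assoc, ← sh_assoc]
  have h : sh a b = sh b a := funext fun w => sh_comm w a b
  rw [h]

lemma sprime_nil (s : Series X) : sprime s [] = 0 := by simp [sprime]

lemma shpow_vanish (p : Series X) (hp : p [] = 0) :
    ∀ (k : ℕ) (η : List X), η.length < k → shpow p k η = 0
  | 0, η, h => by omega
  | k + 1, η, h =>
      sh_vanish η 1 k p (shpow p k)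
        (fun u hu => by
          match u, hu with
          | [], _ => exact hp
          | x :: t, hu => simp at hu)
        (fun u hu => shpow_vanish p hp k u hu) (by omega)

lemma shInv_trunc (s : Series X) (N : ℕ) (η : List X) (h : η.length < N) :
    shInv s η = (s [])⁻¹ * ∑ k ∈ Finset.range N, shpow (sprime s) k η := by
  unfold shInv
  congr 1
  refine Finset.sum_subset (by intro k hk; simp at hk ⊢; omega) ?_
  intro k hk hnk
  simp only [Finset.mem_range] at hk hnk
  exact shpow_vanish (sprime s) (sprime_nil s) k η (by omega)

lemma shInv_nil (s : Series X) : shInv s [] = (s [])⁻¹ := by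
  unfold shInv
  show (s [])⁻¹ * ∑ k ∈ Finset.range (0 + 1), shpow (sprime s) k [] = (s [])⁻¹
  rw [Finset.sum_range_one]
  show (s [])⁻¹ * one [] = (s [])⁻¹
  rw [one_nil, mul_one]

lemma sh_shInv (s : Series X) (hs : s [] ≠ 0) (η : List X) : sh s (shInv s) η = one η := by
  have hone : sh s (shInv s) η
      = sh s (fun w => (s [])⁻¹ * ∑ k ∈ Finset.range (η.length + 1), shpow (sprime s) k w) η :=
    sh_congr η _ _ _ _ (fun _ _ => rfl) (fun u hu => shInv_trunc s _ u (by omega))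
  rw [hone, sh_smul_right η ((s [])⁻¹) s
      (fun w => ∑ k ∈ Finset.range (η.length + 1), shpow (sprime s) k w),
    sh_sum_right (Finset.range (η.length + 1)) s (fun k => shpow (sprime s) k) η]
  have hdec : ∀ w : List X, s w = s [] * (one w - sprime s w) := by
    intro w
    match w with
    | [] => rw [one_nil, sprime_nil, sub_zero, mul_one]
    | x :: t =>
        have h1 : one (x :: t) = 0 := one_cons x t
        have h2 : sprime s (x :: t) = -(s (x :: t) / s []) := by simp [sprime]
        rw [h1, h2]
        field_simp
        ring
  have hterm : ∀ k ∈ Finset.range (η.length + 1), sh s (shpow (sprime s) k) η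
      = s [] * (shpow (sprime s) k η - shpow (sprime s) (k + 1) η) := by
    intro k _
    have h2 : sh s (shpow (sprime s) k) η
        = sh (fun w => s [] * (one w - sprime s w)) (shpow (sprime s) k) η :=
      sh_congr η _ _ _ _ (fun u _ => hdec u) (fun _ _ => rfl)
    rw [h2, sh_smul_left, sh_sub_left, sh_one_left]
    rfl
  rw [Finset.sum_congr rfl hterm, ← Finset.mul_sum,
    Finset.sum_range_sub' (fun k => shpow (sprime s) k η) (η.length + 1),
    shpow_vanish (sprime s) (sprime_nil s) (η.length + 1) η (by omega)]
  show (s [])⁻¹ * (s [] * (one η - 0)) = one η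
  rw [sub_zero, ← mul_assoc, inv_mul_cancel₀ hs, one_mul]

lemma sh_inv_unique (t u u' : Series X) (hu : ∀ η, sh t u η = one η)
    (hu' : ∀ η, sh t u' η = one η) : u = u' := by
  funext η
  have e : sh t u = one := funext hu
  have e' : sh t u' = one := funext hu'
  calc u η = sh u one η := (sh_one_right η u).symm
    _ = sh u (sh t u') η := by rw [e']
    _ = sh (sh u t) u' η := (sh_assoc η u t u').symm
    _ = sh (sh t u) u' η :=
        sh_congr η _ _ _ _ (fun w _ => sh_comm w u t) (fun _ _ => rfl)
    _ = sh one u' η := by rw [e]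
    _ = u' η := sh_one_left η u'

end ShInv

section Hom

variable {ℓ m : ℕ}

lemma mix_sh_hom (E : Fin m → Series (Fin (m + 1))) :
    ∀ (n : ℕ) (η : List (Fin (m + 1))), η.length ≤ n → ∀ a b : Series (Fin (m + 1)),
      mix (sh a b) E η = sh (mix a E) (mix b E) η := by
  intro n
  induction n with
  | zero =>
      intro η hη a b
      cases η with
      | nil => simp only [mix_nil, sh_nil]
      | cons x t => simp at hη
  | succ n ih =>
      intro η hη a b
      cases η with
      | nil => simp only [mix_nil, sh_nil]
      | cons x t =>
          have ht : t.length ≤ n := by simp at hη; omega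
          induction x using Fin.cases with
          | zero =>
              rw [mix_cons_zero]
              have hsplit : mix (fun w => sh a b ((0 : Fin (m + 1)) :: w)) E t
                  = mix (fun w => sh (fun u => a (0 :: u)) b w
                      + sh a (fun u => b (0 :: u)) w) E t := by
                congr 1
              rw [hsplit, mix_add_left, ih t ht (fun u => a (0 :: u)) b,
                ih t ht a (fun u => b (0 :: u)), sh_cons]
              have h1 : (fun w => mix a E ((0 : Fin (m + 1)) :: w))
                  = mix (fun u => a (0 :: u)) E := funext fun w => mix_cons_zero a E w
              have h2 : (fun w => mix b E ((0 : Fin (m + 1)) :: w))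
                  = mix (fun u => b (0 :: u)) E := funext fun w => mix_cons_zero b E w
              rw [h1, h2]
          | succ j =>
              rw [mix_cons_succ, sh_cons]
              have h1 : (fun w => mix a E (j.succ :: w))
                  = sh (E j) (mix (fun u => a (j.succ :: u)) E) :=
                funext fun w => mix_cons_succ a E j w
              have h2 : (fun w => mix b E (j.succ :: w))
                  = sh (E j) (mix (fun u => b (j.succ :: u)) E) :=
                funext fun w => mix_cons_succ b E j w
              rw [h1, h2]
              have hL : sh (E j) (mix (fun w => sh a b (j.succ :: w)) E) t
                  = sh (E j) (fun u => sh (mix (fun v => a (j.succ :: v)) E) (mix b E) u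
                      + sh (mix a E) (mix (fun v => b (j.succ :: v)) E) u) t := by
                refine sh_congr t _ _ _ _ (fun _ _ => rfl) (fun u hu => ?_)
                have hsplit : mix (fun w => sh a b (j.succ :: w)) E u
                    = mix (fun w => sh (fun v => a (j.succ :: v)) b w
                        + sh a (fun v => b (j.succ :: v)) w) E u := by
                  congr 1
                rw [hsplit, mix_add_left, ih u (by omega) (fun v => a (j.succ :: v)) b,
                  ih u (by omega) a (fun v => b (j.succ :: v))]
              rw [hL, sh_add_right,
                ← sh_assoc t (E j) (mix (fun v => a (j.succ :: v)) E) (mix b E),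
                sh_left_comm t (E j) (mix a E) (mix (fun v => b (j.succ :: v)) E)]

lemma comp_sh_hom (e : Fin ℓ → Series (Fin (m + 1))) :
    ∀ (n : ℕ) (η : List (Fin (m + 1))), η.length ≤ n → ∀ a b : Series (Fin (ℓ + 1)),
      comp (sh a b) e η = sh (comp a e) (comp b e) η := by
  intro n
  induction n with
  | zero =>
      intro η hη a b
      cases η with
      | nil => simp only [comp_nil, sh_nil]
      | cons x t => simp at hη
  | succ n ih =>
      intro η hη a b
      cases η with
      | nil => simp only [comp_nil, sh_nil]
      | cons x t =>
          have ht : t.length ≤ n := by simp at hη; omega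
          induction x using Fin.cases with
          | zero =>
              rw [comp_cons_zero, sh_cons]
              have h1 : (fun w => comp a e ((0 : Fin (m + 1)) :: w))
                  = fun w => ∑ i : Fin (ℓ + 1),
                      sh (Fin.cases one e i) (comp (fun u => a (i :: u)) e) w :=
                funext fun w => comp_cons_zero a e w
              have h2 : (fun w => comp b e ((0 : Fin (m + 1)) :: w))
                  = fun w => ∑ i : Fin (ℓ + 1),
                      sh (Fin.cases one e i) (comp (fun u => b (i :: u)) e) w :=
                funext fun w => comp_cons_zero b e w
              rw [h1, h2, sh_sum_left, sh_sum_right, ← Finset.sum_add_distrib]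
              refine Finset.sum_congr rfl fun i _ => ?_
              have hL : sh (Fin.cases one e i) (comp (fun w => sh a b (i :: w)) e) t
                  = sh (Fin.cases one e i)
                      (fun u => sh (comp (fun v => a (i :: v)) e) (comp b e) u
                        + sh (comp a e) (comp (fun v => b (i :: v)) e) u) t := by
                refine sh_congr t _ _ _ _ (fun _ _ => rfl) (fun u hu => ?_)
                have hsplit : comp (fun w => sh a b (i :: w)) e u
                    = comp (fun w => sh (fun v => a (i :: v)) b w
                        + sh a (fun v => b (i :: v)) w) e u := by
                  congr 1
                rw [hsplit, comp_add_left, ih u (by omega) (fun v => a (i :: v)) b,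
                  ih u (by omega) a (fun v => b (i :: v))]
              rw [hL, sh_add_right,
                ← sh_assoc t (Fin.cases one e i) (comp (fun v => a (i :: v)) e) (comp b e),
                sh_left_comm t (Fin.cases one e i) (comp a e) (comp (fun v => b (i :: v)) e)]
          | succ j =>
              rw [comp_cons_succ, sh_cons]
              have h1 : (fun w => comp a e (j.succ :: w)) = fun _ => (0 : ℝ) :=
                funext fun w => comp_cons_succ a e j w
              have h2 : (fun w => comp b e (j.succ :: w)) = fun _ => (0 : ℝ) :=
                funext fun w => comp_cons_succ b e j w
              rw [h1, h2, sh_zero_left, sh_zero_right]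
              norm_num

lemma mix_comp_assoc (c : Fin ℓ → Series (Fin (m + 1))) (E : Fin m → Series (Fin (m + 1))) :
    ∀ (n : ℕ) (η : List (Fin (m + 1))), η.length ≤ n → ∀ s : Series (Fin (ℓ + 1)),
      mix (comp s c) E η = comp s (fun i => mix (c i) E) η := by
  intro n
  induction n with
  | zero =>
      intro η hη s
      cases η with
      | nil => rw [mix_nil, comp_nil, comp_nil]
      | cons x t => simp at hη
  | succ n ih =>
      intro η hη s
      cases η with
      | nil => rw [mix_nil, comp_nil, comp_nil]
      | cons x t =>
          have ht : t.length ≤ n := by simp at hη; omega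
          induction x using Fin.cases with
          | zero =>
              rw [mix_cons_zero, comp_cons_zero]
              have hsplit : mix (fun w => comp s c ((0 : Fin (m + 1)) :: w)) E t
                  = mix (fun w => ∑ i : Fin (ℓ + 1),
                      sh (Fin.cases one c i) (comp (fun u => s (i :: u)) c) w) E t := by
                congr 1
                funext w
                rw [comp_cons_zero]
              rw [hsplit, mix_sum_left]
              refine Finset.sum_congr rfl fun i _ => ?_
              rw [mix_sh_hom E t.length t le_rfl (Fin.cases one c i)
                (comp (fun u => s (i :: u)) c)]
              have hfst : ∀ u, mix (Fin.cases (motive := fun _ => Series (Fin (m + 1))) one c i)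
                  E u
                  = Fin.cases (motive := fun _ => Series (Fin (m + 1))) one
                      (fun i' => mix (c i') E) i u := by
                intro u
                induction i using Fin.cases with
                | zero => rw [Fin.cases_zero, Fin.cases_zero]; exact mix_one E u
                | succ j => rw [Fin.cases_succ, Fin.cases_succ]
              exact sh_congr t _ _ _ _ (fun u _ => hfst u) (fun u hu => ih u (by omega) _)
          | succ j =>
              rw [mix_cons_succ, comp_cons_succ]
              have hz : mix (fun w => comp s c (j.succ :: w)) E = fun _ => (0 : ℝ) := by
                funext u
                have h1 : (fun w => comp s c (j.succ :: w)) = fun _ => (0 : ℝ) :=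
                  funext fun w => comp_cons_succ s c j w
                rw [h1]
                exact mix_zero_left E u
              rw [hz, sh_zero_right]

end Hom

section Congruence

variable {ℓ m : ℕ}

lemma mix_congr : ∀ (n : ℕ) (E E' : Fin m → Series (Fin (m + 1))),
    (∀ j u, u.length < n → E j u = E' j u) →
    ∀ (c : Series (Fin (m + 1))) (η : List (Fin (m + 1))), η.length ≤ n →
      mix c E η = mix c E' η := by
  intro n
  induction n with
  | zero =>
      intro E E' h c η hη
      cases η with
      | nil => rw [mix_nil, mix_nil]
      | cons x t => simp at hη
  | succ n ih =>
      intro E E' h c η hη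
      cases η with
      | nil => rw [mix_nil, mix_nil]
      | cons x t =>
          have ht : t.length ≤ n := by simp at hη; omega
          induction x using Fin.cases with
          | zero =>
              rw [mix_cons_zero, mix_cons_zero,
                ih E E' (fun j u hu => h j u (by omega)) _ t ht]
          | succ j =>
              rw [mix_cons_succ, mix_cons_succ]
              exact sh_congr t _ _ _ _ (fun u hu => h j u (by omega))
                (fun u hu => ih E E' (fun j' u' hu' => h j' u' (by omega)) _ u (by omega))

lemma comp_congr : ∀ (n : ℕ) (e e' : Fin ℓ → Series (Fin (m + 1))),
    (∀ i u, u.length < n → e i u = e' i u) →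
    ∀ (s : Series (Fin (ℓ + 1))) (η : List (Fin (m + 1))), η.length ≤ n →
      comp s e η = comp s e' η := by
  intro n
  induction n with
  | zero =>
      intro e e' h s η hη
      cases η with
      | nil => rw [comp_nil, comp_nil]
      | cons x t => simp at hη
  | succ n ih =>
      intro e e' h s η hη
      cases η with
      | nil => rw [comp_nil, comp_nil]
      | cons x t =>
          have ht : t.length ≤ n := by simp at hη; omega
          induction x using Fin.cases with
          | zero =>
              rw [comp_cons_zero, comp_cons_zero]
              refine Finset.sum_congr rfl fun i _ => ?_
              refine sh_congr t _ _ _ _ (fun u hu => ?_)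
                (fun u hu => ih e e' (fun i' u' hu' => h i' u' (by omega)) _ u (by omega))
              induction i using Fin.cases with
              | zero => rfl
              | succ j' => rw [Fin.cases_succ, Fin.cases_succ]; exact h j' u (by omega)
          | succ j => rw [comp_cons_succ, comp_cons_succ]

end Congruence

section Fixed

/-- The strong-contraction property used for fixed point arguments. -/
def IsContr {X : Type*} [DecidableEq X] {k : ℕ}
    (G : (Fin k → Series X) → (Fin k → Series X)) : Prop :=
  ∀ (n : ℕ) (e₁ e₂ : Fin k → Series X),
    (∀ i u, u.length < n → e₁ i u = e₂ i u) →
    ∀ i (η : List X), η.length ≤ n → G e₁ i η = G e₂ i η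

lemma contr_exists {X : Type*} [DecidableEq X] {k : ℕ}
    {G : (Fin k → Series X) → (Fin k → Series X)} (hG : IsContr G) :
    ∃ e, G e = e := by
  classical
  set a : ℕ → (Fin k → Series X) := fun n => G^[n] (oneV k) with ha_def
  have ha : ∀ n, a (n + 1) = G (a n) := fun n => Function.iterate_succ_apply' G n _
  have hstab : ∀ n (i : Fin k) (η : List X), η.length ≤ n →
      a (n + 1) i η = a (n + 2) i η := by
    intro n
    induction n with
    | zero =>
        intro i η hη
        rw [ha 0, ha 1]
        exact hG 0 _ _ (fun i u hu => by omega) i η hη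
    | succ n ihn =>
        intro i η hη
        rw [ha (n + 1), ha (n + 2)]
        exact hG (n + 1) _ _ (fun i' u hu => ihn i' u (by omega)) i η hη
  have hchain : ∀ (i : Fin k) (η : List X) (N : ℕ), η.length + 1 ≤ N →
      a (η.length + 1) i η = a N i η := by
    intro i η N hN
    induction N, hN using Nat.le_induction with
    | base => rfl
    | succ N hN ihN =>
        rw [ihN]
        obtain ⟨M, rfl⟩ : ∃ M, N = M + 1 := ⟨N - 1, by omega⟩
        exact hstab M i η (by omega)
  refine ⟨fun i η => a (η.length + 1) i η, ?_⟩
  funext i η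
  have hGa : G (fun i' (η' : List X) => a (η'.length + 1) i' η') i η = G (a η.length) i η :=
    hG η.length _ _ (fun i' u hu => hchain i' u η.length (by omega)) i η le_rfl
  show G (fun i' (η' : List X) => a (η'.length + 1) i' η') i η = a (η.length + 1) i η
  rw [hGa, ← ha η.length]

lemma contr_unique {X : Type*} [DecidableEq X] {k : ℕ}
    {G : (Fin k → Series X) → (Fin k → Series X)} (hG : IsContr G)
    {e₁ e₂ : Fin k → Series X} (h₁ : G e₁ = e₁) (h₂ : G e₂ = e₂) : e₁ = e₂ := by
  have key : ∀ (n : ℕ) (i : Fin k) (η : List X), η.length ≤ n → e₁ i η = e₂ i η := by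
    intro n
    induction n with
    | zero =>
        intro i η hη
        conv_lhs => rw [← h₁]
        conv_rhs => rw [← h₂]
        exact hG 0 e₁ e₂ (fun i' u hu => by omega) i η hη
    | succ n ihn =>
        intro i η hη
        conv_lhs => rw [← h₁]
        conv_rhs => rw [← h₂]
        exact hG (n + 1) e₁ e₂ (fun i' u hu => ihn i' u (by omega)) i η hη
  funext i η
  exact key η.length i η le_rfl

end Fixed

section OrdLemmas

lemma ord_ge_iff (h : Series X) (n : ℕ) :
    (n : ℕ∞) ≤ ord h ↔ ∀ η : List X, η.length < n → h η = 0 := by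
  constructor
  · intro hle η hlen
    by_contra h0
    have hmem : ((η.length : ℕ∞)) ∈ ((fun η : List X => (η.length : ℕ∞)) '' {η | h η ≠ 0}) :=
      Set.mem_image_of_mem _ h0
    have h1 : ord h ≤ (η.length : ℕ∞) := sInf_le hmem
    have h2 : (n : ℕ∞) ≤ (η.length : ℕ∞) := le_trans hle h1
    rw [Nat.cast_le] at h2
    omega
  · intro hz
    refine le_sInf ?_
    rintro b ⟨η, hη, rfl⟩
    by_contra hlt
    push_neg at hlt
    rw [Nat.cast_lt] at hlt
    exact hη (hz η hlt)

lemma ordV_ge_iff {k : ℕ} (h : Fin k → Series X) (n : ℕ) :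
    (n : ℕ∞) ≤ ordV h ↔ ∀ i (η : List X), η.length < n → h i η = 0 := by
  unfold ordV
  rw [le_iInf_iff]
  exact forall_congr' fun i => ord_ge_iff (h i) n

lemma powE_antitone {σ : ℝ} (h0 : 0 < σ) (h1 : σ < 1) {x y : ℕ∞} (hxy : x ≤ y) :
    powE σ y ≤ powE σ x := by
  unfold powE
  rcases eq_or_ne x ⊤ with rfl | hx
  · have hy : y = ⊤ := top_le_iff.mp hxy
    simp [hy]
  · rw [if_neg hx]
    rcases eq_or_ne y ⊤ with rfl | hy
    · rw [if_pos rfl]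
      positivity
    · rw [if_neg hy]
      exact pow_le_pow_of_le_one (le_of_lt h0) (le_of_lt h1)
        (ENat.toNat_le_toNat hxy (by simpa using hy))

lemma powE_succ (σ : ℝ) (x : ℕ∞) : powE σ (x + 1) = σ * powE σ x := by
  unfold powE
  rcases eq_or_ne x ⊤ with rfl | hx
  · simp
  · lift x to ℕ using hx
    have h1 : ((x : ℕ∞) + 1) = ((x + 1 : ℕ) : ℕ∞) := by push_cast; ring
    rw [h1, if_neg (ENat.coe_ne_top _), if_neg (ENat.coe_ne_top _), ENat.toNat_coe,
      ENat.toNat_coe, pow_succ]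
    ring

end OrdLemmas

end Aux

/-- The multiplicative dynamic feedback product `c @̌ d = c ∘̄ δ_{(d^{⧢-1} ∘ c)^{∘-1}}`. -/
noncomputable def feedback {m q : ℕ} (c : Fin q → Series (Fin (m + 1)))
    (d : Fin m → Series (Fin (q + 1))) : Fin q → Series (Fin (m + 1)) :=
  fun i => mix (c i) (dynInv fun j => comp (shInv (d j)) c)

/-- The series `e := c ∘̄ δ_{(d^{⧢-1} ∘ c)^{∘-1}}` is the unique fixed
point of the strong contraction `e ↦ c ∘̄ δ_{d ∘ e}` on `ℝ^q⟨⟨X⟩⟩`. -/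
theorem mult_dyn_feedback_fixed_point (m q : ℕ)
    (c : Fin q → Series (Fin (m + 1))) (d : Fin m → Series (Fin (q + 1)))
    (hd : ∀ j, d j [] ≠ 0) :
    ((fun i => mix (c i) fun j => comp (d j) (feedback c d)) = feedback c d) ∧
    (∀ e' : Fin q → Series (Fin (m + 1)),
      (fun i => mix (c i) fun j => comp (d j) e') = e' → e' = feedback c d) ∧
    (∀ σ : ℝ, 0 < σ → σ < 1 → ∀ e₁ e₂ : Fin q → Series (Fin (m + 1)),
      kappaV σ (fun i => mix (c i) fun j => comp (d j) e₁)
        (fun i => mix (c i) fun j => comp (d j) e₂) ≤ σ * kappaV σ e₁ e₂) := by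
  classical
  have hPhi : IsContr (fun e : Fin q → Series (Fin (m + 1)) =>
      fun i => mix (c i) fun j => comp (d j) e) := fun n e₁ e₂ hagree i η hη =>
    mix_congr n _ _
      (fun j u hu => comp_congr n e₁ e₂ hagree (d j) u (le_of_lt hu)) (c i) η hη
  have hPsi : IsContr (fun E : Fin m → Series (Fin (m + 1)) =>
      fun j => mix (shInv (comp (shInv (d j)) c)) E) := fun n E₁ E₂ hagree j η hη =>
    mix_congr n E₁ E₂ hagree _ η hη
  have hE₀ : dynInv (fun j => comp (shInv (d j)) c)
      = fun j => mix (shInv (comp (shInv (d j)) c))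
          (dynInv fun j' => comp (shInv (d j')) c) := by
    have hex : ∃ e : Fin m → Series (Fin (m + 1)),
        e = fun j => mix (shInv (comp (shInv (d j)) c)) e := by
      obtain ⟨E, hE⟩ := contr_exists hPsi
      exact ⟨E, hE.symm⟩
    unfold dynInv
    rw [dif_pos hex]
    exact hex.choose_spec
  have hkey : ∀ j, shInv (comp (shInv (d j)) c) = comp (d j) c := by
    intro j
    have hne : comp (shInv (d j)) c [] ≠ 0 := by
      rw [comp_nil, shInv_nil]
      exact inv_ne_zero (hd j)
    refine sh_inv_unique (comp (shInv (d j)) c) _ _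
      (fun η => sh_shInv _ hne η) (fun η => ?_)
    rw [← comp_sh_hom c η.length η le_rfl (shInv (d j)) (d j)]
    have h1 : sh (shInv (d j)) (d j) = one :=
      funext fun w => (sh_comm w _ _).trans (sh_shInv (d j) (hd j) w)
    rw [h1]
    exact comp_one c η
  have hfix : (fun i => mix (c i) fun j => comp (d j) (feedback c d)) = feedback c d := by
    have hD : (fun j => comp (d j) (feedback c d))
        = dynInv fun j' => comp (shInv (d j')) c := by
      funext j η
      calc comp (d j) (feedback c d) η
          = mix (comp (d j) c) (dynInv fun j' => comp (shInv (d j')) c) η :=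
            (mix_comp_assoc c _ η.length η le_rfl (d j)).symm
        _ = mix (shInv (comp (shInv (d j)) c))
              (dynInv fun j' => comp (shInv (d j')) c) η := by rw [hkey j]
        _ = dynInv (fun j' => comp (shInv (d j')) c) j η :=
            (congrFun (congrFun hE₀ j) η).symm
    show (fun i => mix (c i) fun j => comp (d j) (feedback c d)) = feedback c d
    rw [hD]
    rfl
  refine ⟨hfix, fun e' he' => contr_unique hPhi he' hfix, ?_⟩
  intro σ hσ0 hσ1 e₁ e₂
  show powE σ (ordV ((fun i => mix (c i) fun j => comp (d j) e₁)
      - fun i => mix (c i) fun j => comp (d j) e₂)) ≤ σ * powE σ (ordV (e₁ - e₂))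
  rw [← powE_succ σ (ordV (e₁ - e₂))]
  refine powE_antitone hσ0 hσ1 ?_
  rcases eq_or_ne (ordV (e₁ - e₂)) ⊤ with htop | hne
  · have he : e₁ = e₂ := by
      funext i η
      have h0 := (ordV_ge_iff (e₁ - e₂) (η.length + 1)).mp (htop ▸ le_top) i η (by omega)
      have h1 : e₁ i η - e₂ i η = 0 := h0
      linarith
    subst he
    have hsub : ((fun i => mix (c i) fun j => comp (d j) e₁)
        - fun i => mix (c i) fun j => comp (d j) e₁)
        = (fun (_ : Fin q) (_ : List (Fin (m + 1))) => (0 : ℝ)) := by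
      funext i η
      simp only [Pi.sub_apply]
      exact sub_self _
    rw [hsub]
    have hordtop : ordV (fun (_ : Fin q) (_ : List (Fin (m + 1))) => (0 : ℝ)) = ⊤ := by
      unfold ordV ord
      simp
    rw [hordtop, htop]
    exact le_top
  · obtain ⟨nn, hnn⟩ : ∃ nn : ℕ, ordV (e₁ - e₂) = (nn : ℕ∞) :=
      ⟨(ordV (e₁ - e₂)).toNat, (ENat.coe_toNat hne).symm⟩
    rw [hnn]
    have hagree : ∀ i u, u.length < nn → e₁ i u = e₂ i u := by
      intro i u hu
      have h0 := (ordV_ge_iff (e₁ - e₂) nn).mp (le_of_eq hnn.symm) i u hu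
      have h1 : e₁ i u - e₂ i u = 0 := h0
      linarith
    have h2 := hPhi nn e₁ e₂ hagree
    have h3 : ((nn + 1 : ℕ) : ℕ∞) ≤ ordV ((fun i => mix (c i) fun j => comp (d j) e₁)
        - fun i => mix (c i) fun j => comp (d j) e₂) := by
      refine (ordV_ge_iff _ (nn + 1)).mpr fun i η hη => ?_
      have h4 : mix (c i) (fun j => comp (d j) e₁) η
          = mix (c i) (fun j => comp (d j) e₂) η := h2 i η (by omega)
      simp only [Pi.sub_apply]
      rw [h4, sub_self]
    calc ((nn : ℕ∞)) + 1 = ((nn + 1 : ℕ) : ℕ∞) := by push_cast; ring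
      _ ≤ _ := h3

end FPS
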